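/- arXiv:1707.07130 — 2 statements merged into one kernel-verified Lean document; each statement's English description precedes it below -/
import Mathlib

section
/- Let k be a non-negative integer and let τ be a locally compact Hausdorff shift-continuous topology on B⁰(B_k) in which the adjoined zero 0* is not isolated. Then for every open neighborhood U of 0* there exists a non-negative integer n_U such that [0,m] ⊆ U for every integer m > n_U. -/
open Ordinal Set Topology

noncomputable section

/-- The `α`-bicyclic monoid: pairs of ordinals below `ω ^ α`. -/
def Bicyclic (α : Ordinal) : Type 1 :=
  {p : Ordinal × Ordinal // p.1 < ω ^ α ∧ p.2 < ω ^ α}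

namespace Bicyclic

variable {α : Ordinal}

def mk (a b : Ordinal) (ha : a < ω ^ α) (hb : b < ω ^ α) : Bicyclic α :=
  ⟨(a, b), ha, hb⟩

instance : Mul (Bicyclic α) :=
  ⟨fun x y =>
    if x.val.2 ≤ y.val.1 then
      ⟨(x.val.1 + (y.val.1 - x.val.2), y.val.2),
        (principal_add_omega0_opow α) x.2.1
          (lt_of_le_of_lt (Ordinal.sub_le_self _ _) y.2.1),
        y.2.2⟩
    else
      ⟨(x.val.1, y.val.2 + (x.val.2 - y.val.1)),
        x.2.1,
        (principal_add_omega0_opow α) y.2.2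
          (lt_of_le_of_lt (Ordinal.sub_le_self _ _) x.2.2)⟩⟩

instance : One (Bicyclic α) :=
  ⟨⟨(0, 0), opow_pos α omega0_pos, opow_pos α omega0_pos⟩⟩

end Bicyclic

/-- The Bruck extension of a semigroup `S`. -/
def Bruck (S : Type*) : Type _ := ℕ × S × ℕ

def Bruck.mk {S : Type*} (n : ℕ) (s : S) (m : ℕ) : Bruck S := (n, s, m)

instance {S : Type*} [Mul S] : Mul (Bruck S) :=
  ⟨fun x y =>
    if x.2.2 < y.1 then (x.1 + y.1 - x.2.2, y.2.1, y.2.2)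
    else if y.1 < x.2.2 then (x.1, x.2.1, y.2.2 + x.2.2 - y.1)
    else (x.1, x.2.1 * y.2.1, y.2.2)⟩

/-- The Bruck extension of `S` with an adjoined (absorbing) zero `0*`. -/
abbrev BruckZero (S : Type*) := WithZero (Bruck S)

/-- The box `[n,m]` in the Bruck extension with zero. -/
def box (S : Type*) (n m : ℕ) : Set (BruckZero S) :=
  {x | ∃ s : S, x = ↑(Bruck.mk n s m)}

/-- A topology on `X` is shift-continuous if all two-sided shifts `x ↦ a * x * b`
are continuous. -/
def ShiftContinuous (X : Type*) [Mul X] [TopologicalSpace X] : Prop :=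
  ∀ a b : X, Continuous fun x => a * x * b

-- chunk 1 : algebra
namespace Aux11

theorem bic_val_mul {α : Ordinal} (x y : Bicyclic α) :
    (x * y).val = if x.val.2 ≤ y.val.1 then (x.val.1 + (y.val.1 - x.val.2), y.val.2)
      else (x.val.1, y.val.2 + (x.val.2 - y.val.1)) := by
  show Subtype.val (ite _ _ _) = _
  rw [apply_ite Subtype.val]

theorem bic_val_one {α : Ordinal} : (1 : Bicyclic α).val = ((0:Ordinal), (0:Ordinal)) := rfl

theorem bic_mul_one {α : Ordinal} (s : Bicyclic α) : s * 1 = s := by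
  apply Subtype.ext
  rw [bic_val_mul, bic_val_one]
  rcases eq_or_lt_of_le (zero_le : (0:Ordinal) ≤ s.val.2) with h | h
  · rw [if_pos (le_of_eq h.symm)]
    show (s.val.1 + ((0:Ordinal) - s.val.2), (0:Ordinal)) = s.val
    rw [← h, Ordinal.sub_self, add_zero]
    exact Prod.ext rfl h
  · rw [if_neg (not_le_of_gt h)]
    show (s.val.1, (0:Ordinal) + (s.val.2 - 0)) = s.val
    rw [Ordinal.sub_zero, zero_add]

theorem bic_one_mul {α : Ordinal} (s : Bicyclic α) : 1 * s = s := by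
  apply Subtype.ext
  rw [bic_val_mul, bic_val_one]
  rw [if_pos (zero_le : (0:Ordinal) ≤ s.val.1)]
  show ((0:Ordinal) + (s.val.1 - 0), s.val.2) = s.val
  rw [Ordinal.sub_zero, zero_add]

end Aux11
-- chunk 2 : Bruck computations
namespace Aux11

variable {α : Ordinal}

theorem bmul_mk {S : Type*} [Mul S] (a : ℕ) (s : S) (b c : ℕ) (t : S) (d : ℕ) :
    (Bruck.mk a s b) * (Bruck.mk c t d) =
      if b < c then Bruck.mk (a + c - b) t d
      else if c < b then Bruck.mk a s (d + b - c)
      else Bruck.mk a (s * t) d := rfl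

theorem mk_inj {S : Type*} {n m n' m' : ℕ} {s s' : S} :
    (Bruck.mk n s m : Bruck S) = Bruck.mk n' s' m' ↔ n = n' ∧ s = s' ∧ m = m' := by
  constructor
  · intro h
    exact ⟨congrArg (fun x : Bruck S => x.1) h, congrArg (fun x : Bruck S => x.2.1) h,
      congrArg (fun x : Bruck S => x.2.2) h⟩
  · rintro ⟨rfl, rfl, rfl⟩; rfl

theorem mk_surj {S : Type*} (x : Bruck S) : ∃ n s m, x = Bruck.mk n s m :=
  ⟨x.1, x.2.1, x.2.2, rfl⟩

-- x * (0,1,0) = x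
theorem g1r (x : Bruck (Bicyclic α)) : x * Bruck.mk 0 (1 : Bicyclic α) 0 = x := by
  obtain ⟨a, s, b, rfl⟩ := mk_surj x
  rw [bmul_mk]
  split_ifs with h1 h2
  · omega
  · rw [mk_inj]; exact ⟨rfl, rfl, by omega⟩
  · rw [bic_mul_one, mk_inj]; exact ⟨rfl, rfl, by omega⟩

theorem g1l (x : Bruck (Bicyclic α)) : Bruck.mk 0 (1 : Bicyclic α) 0 * x = x := by
  obtain ⟨a, s, b, rfl⟩ := mk_surj x
  rw [bmul_mk]
  split_ifs with h1 h2
  · rw [mk_inj]; exact ⟨by omega, rfl, rfl⟩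
  · omega
  · rw [bic_one_mul, mk_inj]; exact ⟨by omega, rfl, rfl⟩

-- (0,1,c+1) * (c,s,d) = (0,1,d+1)
theorem g2 (c : ℕ) (s : Bicyclic α) (d : ℕ) :
    Bruck.mk 0 (1 : Bicyclic α) (c+1) * Bruck.mk c s d = Bruck.mk 0 1 (d+1) := by
  rw [bmul_mk]
  split_ifs with h1 h2
  · omega
  · rw [mk_inj]; exact ⟨rfl, rfl, by omega⟩
  · omega

-- (c,s,d) * (d+1,1,0) = (c+1,1,0)
theorem g3 (c : ℕ) (s : Bicyclic α) (d : ℕ) :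
    Bruck.mk c s d * Bruck.mk (d+1) (1 : Bicyclic α) 0 = Bruck.mk (c+1) 1 0 := by
  rw [bmul_mk]
  split_ifs with h1 h2
  · rw [mk_inj]; exact ⟨by omega, rfl, rfl⟩
  · omega
  · omega

-- (j,1,0) * (0,t,b) = (j,t,b)
theorem g4 (j : ℕ) (t : Bicyclic α) (b : ℕ) :
    Bruck.mk j (1 : Bicyclic α) 0 * Bruck.mk 0 t b = Bruck.mk j t b := by
  rw [bmul_mk, if_neg (lt_irrefl 0), if_neg (lt_irrefl 0), bic_one_mul]

-- (c,s,d) * (0,1,1) = (c,s,d+1)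
theorem g5 (c : ℕ) (s : Bicyclic α) (d : ℕ) :
    Bruck.mk c s d * Bruck.mk 0 (1 : Bicyclic α) 1 = Bruck.mk c s (d+1) := by
  rw [bmul_mk]
  split_ifs with h1 h2
  · omega
  · rw [mk_inj]; exact ⟨rfl, rfl, by omega⟩
  · have : d = 0 := by omega
    subst this
    rw [bic_mul_one]

-- (0,1,1) * (r+1,s,d) = (r,s,d)
theorem g6a (r : ℕ) (s : Bicyclic α) (d : ℕ) :
    Bruck.mk 0 (1 : Bicyclic α) 1 * Bruck.mk (r+1) s d = Bruck.mk r s d := by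
  rw [bmul_mk]
  split_ifs with h1 h2
  · rw [mk_inj]; exact ⟨by omega, rfl, rfl⟩
  · omega
  · have : r = 0 := by omega
    subst this
    rw [bic_one_mul]

-- (0,1,1) * (0,s,d) = (0,1,d+1)
theorem g6b (s : Bicyclic α) (d : ℕ) :
    Bruck.mk 0 (1 : Bicyclic α) 1 * Bruck.mk 0 s d = Bruck.mk 0 1 (d+1) := by
  rw [bmul_mk]
  split_ifs with h1 h2
  · omega
  · rw [mk_inj]; exact ⟨rfl, rfl, by omega⟩
  · omega

-- (0,s,e+1) * (1,1,0) = (0,s,e)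
theorem g7 (s : Bicyclic α) (e : ℕ) :
    Bruck.mk 0 s (e+1) * Bruck.mk 1 (1 : Bicyclic α) 0 = Bruck.mk 0 s e := by
  rcases Nat.eq_zero_or_pos e with he | he
  · subst he
    rw [bmul_mk, if_neg (by omega), if_neg (by omega), bic_mul_one]
  · rw [bmul_mk, if_neg (by omega), if_pos (by omega), mk_inj]
    exact ⟨rfl, rfl, by omega⟩

-- d > p : (c,s,d) * (p,1,p) = (c,s,d)
theorem g8 (c : ℕ) (s : Bicyclic α) (d p : ℕ) (h : p < d) :
    Bruck.mk c s d * Bruck.mk p (1 : Bicyclic α) p = Bruck.mk c s d := by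
  rw [bmul_mk, if_neg (by omega), if_pos h, mk_inj]
  exact ⟨rfl, rfl, by omega⟩

-- (n,t,m) * (m+1,1,m+1) = (n+1,1,m+1)
theorem g8b (n : ℕ) (t : Bicyclic α) (m : ℕ) :
    Bruck.mk n t m * Bruck.mk (m+1) (1 : Bicyclic α) (m+1) = Bruck.mk (n+1) 1 (m+1) := by
  rw [bmul_mk, if_pos (Nat.lt_succ_self m), mk_inj]
  exact ⟨by omega, rfl, rfl⟩

-- c > p : (p,1,p) * (c,s,d) = (c,s,d)
theorem g9 (c : ℕ) (s : Bicyclic α) (d p : ℕ) (h : p < c) :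
    Bruck.mk p (1 : Bicyclic α) p * Bruck.mk c s d = Bruck.mk c s d := by
  rw [bmul_mk, if_pos h, mk_inj]
  exact ⟨by omega, rfl, rfl⟩

-- (n+1,1,n+1) * (n,t,m) = (n+1,1,m+1)
theorem g9b (n : ℕ) (t : Bicyclic α) (m : ℕ) :
    Bruck.mk (n+1) (1 : Bicyclic α) (n+1) * Bruck.mk n t m = Bruck.mk (n+1) 1 (m+1) := by
  rw [bmul_mk]
  split_ifs with h1 h2
  · omega
  · rw [mk_inj]; exact ⟨rfl, rfl, by omega⟩
  · omega

-- (0,s,0) * (0,1,j) = (0,s,j)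
theorem g10 (s : Bicyclic α) (j : ℕ) :
    Bruck.mk 0 s 0 * Bruck.mk 0 (1 : Bicyclic α) j = Bruck.mk 0 s j := by
  rw [bmul_mk, if_neg (lt_irrefl 0), if_neg (lt_irrefl 0), bic_mul_one]

end Aux11
-- chunk 3 : BruckZero level
namespace Aux11

variable {α : Ordinal}

/-- The nonzero element `(n,s,m)` of `B⁰(B_α)`. -/
def pt (n : ℕ) (s : Bicyclic α) (m : ℕ) : BruckZero (Bicyclic α) := ↑(Bruck.mk n s m)

theorem pt_mul_pt (a : ℕ) (s : Bicyclic α) (b c : ℕ) (t : Bicyclic α) (d : ℕ) :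
    pt a s b * pt c t d = ↑(Bruck.mk a s b * Bruck.mk c t d) := rfl

theorem pt_inj {n m n' m' : ℕ} {s s' : Bicyclic α} :
    pt n s m = pt n' s' m' ↔ n = n' ∧ s = s' ∧ m = m' := by
  rw [pt, pt, WithZero.coe_inj, mk_inj]

theorem pt_ne_zero (n : ℕ) (s : Bicyclic α) (m : ℕ) : pt n s m ≠ 0 :=
  WithZero.coe_ne_zero

/-- second (column) coordinate, `0` at zero. -/
def dc : BruckZero (Bicyclic α) → ℕ :=
  WithZero.recZeroCoe 0 (fun b => b.2.2)

/-- first (row) coordinate, `0` at zero. -/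
def cc : BruckZero (Bicyclic α) → ℕ :=
  WithZero.recZeroCoe 0 (fun b => b.1)

@[simp] theorem dc_pt (n : ℕ) (s : Bicyclic α) (m : ℕ) : dc (pt n s m) = m := rfl
@[simp] theorem cc_pt (n : ℕ) (s : Bicyclic α) (m : ℕ) : cc (pt n s m) = n := rfl
@[simp] theorem dc_zero : dc (0 : BruckZero (Bicyclic α)) = 0 := rfl
@[simp] theorem cc_zero : cc (0 : BruckZero (Bicyclic α)) = 0 := rfl

theorem zero_or_pt (x : BruckZero (Bicyclic α)) :
    x = 0 ∨ ∃ n s m, x = pt n s m := by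
  induction x using WithZero.recZeroCoe with
  | zero => exact Or.inl rfl
  | coe b =>
    obtain ⟨n, s, m, rfl⟩ := mk_surj b
    exact Or.inr ⟨n, s, m, rfl⟩

theorem mulE (y : BruckZero (Bicyclic α)) : y * pt 0 1 0 = y := by
  rcases zero_or_pt y with rfl | ⟨n, s, m, rfl⟩
  · exact zero_mul _
  · rw [pt_mul_pt, g1r]; rfl

theorem Emul (y : BruckZero (Bicyclic α)) : pt 0 1 0 * y = y := by
  rcases zero_or_pt y with rfl | ⟨n, s, m, rfl⟩
  · exact mul_zero _
  · rw [pt_mul_pt, g1l]; rfl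

section Topo

variable [TopologicalSpace (BruckZero (Bicyclic α))]

theorem contL (hτ : ShiftContinuous (BruckZero (Bicyclic α))) (a : BruckZero (Bicyclic α)) :
    Continuous fun x => a * x := by
  have h := hτ a (pt 0 1 0)
  simpa only [mulE] using h

theorem contR (hτ : ShiftContinuous (BruckZero (Bicyclic α))) (b : BruckZero (Bicyclic α)) :
    Continuous fun x => x * b := by
  have h := hτ (pt 0 1 0) b
  simpa only [Emul] using h

theorem tendL (hτ : ShiftContinuous (BruckZero (Bicyclic α))) (a : BruckZero (Bicyclic α)) :
    Filter.Tendsto (fun x => a * x) (nhds 0) (nhds 0) := by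
  simpa only [mul_zero] using (contL hτ a).tendsto 0

theorem tendR (hτ : ShiftContinuous (BruckZero (Bicyclic α))) (b : BruckZero (Bicyclic α)) :
    Filter.Tendsto (fun x => x * b) (nhds 0) (nhds 0) := by
  simpa only [zero_mul] using (contR hτ b).tendsto 0

end Topo

end Aux11
-- chunk 4 : cluster machinery
namespace Aux11

open Filter

variable {α : Ordinal} [TopologicalSpace (BruckZero (Bicyclic α))]
  [T2Space (BruckZero (Bicyclic α))]

theorem cluster_fix {σ : BruckZero (Bicyclic α) → BruckZero (Bicyclic α)}
    (hσ : Continuous σ) {q : BruckZero (Bicyclic α)} {B : Set (BruckZero (Bicyclic α))}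
    (hcl : ClusterPt q (cofinite ⊓ 𝓟 B)) (hfix : {x | x ∈ B ∧ σ x ≠ x}.Finite) :
    σ q = q := by
  obtain ⟨u, hu_le, hu_nhds⟩ := clusterPt_iff_ultrafilter.mp hcl
  have hB : B ∈ u := hu_le.trans inf_le_right (mem_principal_self B)
  have hfixc : {x | x ∈ B ∧ σ x ≠ x}ᶜ ∈ u :=
    hu_le.trans inf_le_left hfix.compl_mem_cofinite
  have hFix : {x | x ∈ B ∧ σ x = x} ∈ u := by
    filter_upwards [hB, hfixc] with x hx1 hx2
    refine ⟨hx1, ?_⟩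
    by_contra hne
    exact hx2 ⟨hx1, hne⟩
  have h1 : Tendsto σ (u : Filter _) (nhds (σ q)) := (hσ.tendsto q).mono_left hu_nhds
  have h2 : Tendsto σ (u : Filter _) (nhds q) := by
    rw [Filter.tendsto_def]
    intro S hS
    have hSu : S ∈ u := hu_nhds hS
    filter_upwards [hSu, hFix] with x hx1 hx2
    show σ x ∈ S
    rwa [hx2.2]
  exact tendsto_nhds_unique h1 h2

theorem clusterD (hτ : ShiftContinuous (BruckZero (Bicyclic α)))
    {B : Set (BruckZero (Bicyclic α))}
    (hd : ∀ N : ℕ, {x | x ∈ B ∧ dc x ≤ N}.Finite) {q : BruckZero (Bicyclic α)}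
    (hcl : ClusterPt q (cofinite ⊓ 𝓟 B)) : q = 0 := by
  rcases zero_or_pt q with rfl | ⟨n, t, m, rfl⟩
  · rfl
  · exfalso
    have hfix : {x | x ∈ B ∧ x * pt (m+1) 1 (m+1) ≠ x}.Finite := by
      apply (hd (m+1)).subset
      rintro x ⟨hxB, hxne⟩
      refine ⟨hxB, ?_⟩
      by_contra hgt
      push_neg at hgt
      rcases zero_or_pt x with rfl | ⟨c, s, d, rfl⟩
      · exact hxne (zero_mul _)
      · rw [dc_pt] at hgt
        exact hxne (by rw [pt_mul_pt, g8 c s d (m+1) hgt]; rfl)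
    have hfx := cluster_fix (contR hτ (pt (m+1) 1 (m+1))) hcl hfix
    rw [pt_mul_pt, g8b] at hfx
    have h2 : pt (n+1) (1 : Bicyclic α) (m+1) = pt n t m := hfx
    rw [pt_inj] at h2
    omega

theorem clusterC (hτ : ShiftContinuous (BruckZero (Bicyclic α)))
    {B : Set (BruckZero (Bicyclic α))}
    (hc : ∀ N : ℕ, {x | x ∈ B ∧ cc x ≤ N}.Finite) {q : BruckZero (Bicyclic α)}
    (hcl : ClusterPt q (cofinite ⊓ 𝓟 B)) : q = 0 := by
  rcases zero_or_pt q with rfl | ⟨n, t, m, rfl⟩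
  · rfl
  · exfalso
    have hfix : {x | x ∈ B ∧ pt (n+1) 1 (n+1) * x ≠ x}.Finite := by
      apply (hc (n+1)).subset
      rintro x ⟨hxB, hxne⟩
      refine ⟨hxB, ?_⟩
      by_contra hgt
      push_neg at hgt
      rcases zero_or_pt x with rfl | ⟨c, s, d, rfl⟩
      · exact hxne (mul_zero _)
      · rw [cc_pt] at hgt
        exact hxne (by rw [pt_mul_pt, g9 c s d (n+1) hgt]; rfl)
    have hfx := cluster_fix (contL hτ (pt (n+1) 1 (n+1))) hcl hfix
    rw [pt_mul_pt, g9b] at hfx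
    have h2 : pt (n+1) (1 : Bicyclic α) (m+1) = pt n t m := hfx
    rw [pt_inj] at h2
    omega

theorem diamondD (hτ : ShiftContinuous (BruckZero (Bicyclic α)))
    {K B W : Set (BruckZero (Bicyclic α))} (hK : IsCompact K) (hBK : B ⊆ K)
    (hd : ∀ N : ℕ, {x | x ∈ B ∧ dc x ≤ N}.Finite)
    (hW : W ∈ nhds (0 : BruckZero (Bicyclic α))) : (B \ W).Finite := by
  by_contra hinf
  rw [← Set.not_infinite, not_not] at hinf
  haveI hne : NeBot (cofinite ⊓ 𝓟 (B \ W)) := cofinite_inf_principal_neBot_iff.2 hinf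
  have hle : cofinite ⊓ 𝓟 (B \ W) ≤ 𝓟 K :=
    le_trans inf_le_right (principal_mono.2 (Set.diff_subset.trans hBK))
  obtain ⟨q, _, hq⟩ := hK.exists_clusterPt hle
  have hq0 : q = 0 := by
    refine clusterD hτ (fun N => (hd N).subset ?_) hq
    rintro x ⟨hx1, hx2⟩
    exact ⟨hx1.1, hx2⟩
  subst hq0
  have hmem : W ∩ (B \ W) ∈ nhds (0 : BruckZero (Bicyclic α)) ⊓ (cofinite ⊓ 𝓟 (B \ W)) :=
    inter_mem (mem_inf_of_left hW) (mem_inf_of_right (mem_inf_of_right (mem_principal_self _)))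
  obtain ⟨x, hxW, hxBW⟩ := hq.neBot.nonempty_of_mem hmem
  exact hxBW.2 hxW

theorem diamondC (hτ : ShiftContinuous (BruckZero (Bicyclic α)))
    {K B W : Set (BruckZero (Bicyclic α))} (hK : IsCompact K) (hBK : B ⊆ K)
    (hc : ∀ N : ℕ, {x | x ∈ B ∧ cc x ≤ N}.Finite)
    (hW : W ∈ nhds (0 : BruckZero (Bicyclic α))) : (B \ W).Finite := by
  by_contra hinf
  rw [← Set.not_infinite, not_not] at hinf
  haveI hne : NeBot (cofinite ⊓ 𝓟 (B \ W)) := cofinite_inf_principal_neBot_iff.2 hinf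
  have hle : cofinite ⊓ 𝓟 (B \ W) ≤ 𝓟 K :=
    le_trans inf_le_right (principal_mono.2 (Set.diff_subset.trans hBK))
  obtain ⟨q, _, hq⟩ := hK.exists_clusterPt hle
  have hq0 : q = 0 := by
    refine clusterC hτ (fun N => (hc N).subset ?_) hq
    rintro x ⟨hx1, hx2⟩
    exact ⟨hx1.1, hx2⟩
  subst hq0
  have hmem : W ∩ (B \ W) ∈ nhds (0 : BruckZero (Bicyclic α)) ⊓ (cofinite ⊓ 𝓟 (B \ W)) :=
    inter_mem (mem_inf_of_left hW) (mem_inf_of_right (mem_inf_of_right (mem_principal_self _)))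
  obtain ⟨x, hxW, hxBW⟩ := hq.neBot.nonempty_of_mem hmem
  exact hxBW.2 hxW

end Aux11
-- chunk 5 : part I helpers
namespace Aux11

open Filter

variable {α : Ordinal} [TopologicalSpace (BruckZero (Bicyclic α))]
  [T2Space (BruckZero (Bicyclic α))]

theorem punct_neBot (h0 : ¬ IsOpen ({0} : Set (BruckZero (Bicyclic α)))) :
    (𝓝[≠] (0 : BruckZero (Bicyclic α))).NeBot := by
  by_contra h
  rw [not_neBot, nhdsWithin, inf_principal_eq_bot, compl_compl] at h
  refine h0 (isOpen_iff_mem_nhds.mpr ?_)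
  intro a ha
  rw [Set.mem_singleton_iff] at ha
  subst ha
  exact h

theorem nat_unbounded {s : Set ℕ} (hs : s.Infinite) (N : ℕ) : ∃ j ∈ s, N < j := by
  by_contra h
  push_neg at h
  exact hs ((Set.finite_Iic N).subset h)

theorem compl_finite_nhds {C : Set (BruckZero (Bicyclic α))} (hC : C.Finite)
    (h0C : (0 : BruckZero (Bicyclic α)) ∉ C) :
    Cᶜ ∈ nhds (0 : BruckZero (Bicyclic α)) :=
  hC.isClosed.isOpen_compl.mem_nhds h0C

theorem zcaseA (hτ : ShiftContinuous (BruckZero (Bicyclic α))) {c₀ : ℕ}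
    (hA : ((𝓝[≠] (0 : BruckZero (Bicyclic α))) ⊓ 𝓟 {x | cc x = c₀}).NeBot)
    {W : Set (BruckZero (Bicyclic α))} (hW : W ∈ nhds (0 : BruckZero (Bicyclic α))) :
    {j : ℕ | pt 0 1 j ∈ W}.Infinite := by
  by_contra hf
  rw [Set.not_infinite] at hf
  set C : Set (BruckZero (Bicyclic α)) := (fun j : ℕ => pt (α := α) 0 1 j) '' {j : ℕ | pt 0 1 j ∈ W}
    with hCdef
  have hCfin : C.Finite := hf.image _
  have h0C : (0 : BruckZero (Bicyclic α)) ∉ C := by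
    rintro ⟨j, _, hj⟩
    exact pt_ne_zero 0 1 j hj
  have hW' : W ∩ Cᶜ ∈ nhds (0 : BruckZero (Bicyclic α)) :=
    Filter.inter_mem hW (compl_finite_nhds hCfin h0C)
  have hpre : (fun x => pt (α := α) 0 1 (c₀+1) * x) ⁻¹' (W ∩ Cᶜ) ∈
      nhds (0 : BruckZero (Bicyclic α)) := tendL hτ _ hW'
  have hmem : ((fun x => pt (α := α) 0 1 (c₀+1) * x) ⁻¹' (W ∩ Cᶜ) ∩ {0}ᶜ) ∩ {x | cc x = c₀} ∈
      (𝓝[≠] (0 : BruckZero (Bicyclic α))) ⊓ 𝓟 {x | cc x = c₀} :=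
    Filter.inter_mem
      (mem_inf_of_left (Filter.inter_mem (mem_nhdsWithin_of_mem_nhds hpre) self_mem_nhdsWithin))
      (mem_inf_of_right (mem_principal_self _))
  obtain ⟨x, ⟨hx1, hx2⟩, hx3⟩ := hA.nonempty_of_mem hmem
  rcases zero_or_pt x with rfl | ⟨c, s, d, rfl⟩
  · exact hx2 rfl
  · rw [Set.mem_setOf_eq, cc_pt] at hx3
    subst hx3
    rw [Set.mem_preimage, pt_mul_pt, g2] at hx1
    have hzW : (↑(Bruck.mk 0 (1:Bicyclic α) (d+1)) : BruckZero (Bicyclic α)) ∈ W := hx1.1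
    exact hx1.2 ⟨d+1, hzW, rfl⟩

theorem wcaseB (hτ : ShiftContinuous (BruckZero (Bicyclic α))) {d₀ : ℕ}
    (hB : ((𝓝[≠] (0 : BruckZero (Bicyclic α))) ⊓ 𝓟 {x | dc x = d₀}).NeBot)
    {W : Set (BruckZero (Bicyclic α))} (hW : W ∈ nhds (0 : BruckZero (Bicyclic α))) :
    {j : ℕ | pt j 1 0 ∈ W}.Infinite := by
  by_contra hf
  rw [Set.not_infinite] at hf
  set C : Set (BruckZero (Bicyclic α)) := (fun j : ℕ => pt (α := α) j 1 0) '' {j : ℕ | pt j 1 0 ∈ W}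
    with hCdef
  have hCfin : C.Finite := hf.image _
  have h0C : (0 : BruckZero (Bicyclic α)) ∉ C := by
    rintro ⟨j, _, hj⟩
    exact pt_ne_zero j 1 0 hj
  have hW' : W ∩ Cᶜ ∈ nhds (0 : BruckZero (Bicyclic α)) :=
    Filter.inter_mem hW (compl_finite_nhds hCfin h0C)
  have hpre : (fun x => x * pt (α := α) (d₀+1) 1 0) ⁻¹' (W ∩ Cᶜ) ∈
      nhds (0 : BruckZero (Bicyclic α)) := tendR hτ _ hW'
  have hmem : ((fun x => x * pt (α := α) (d₀+1) 1 0) ⁻¹' (W ∩ Cᶜ) ∩ {0}ᶜ) ∩ {x | dc x = d₀} ∈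
      (𝓝[≠] (0 : BruckZero (Bicyclic α))) ⊓ 𝓟 {x | dc x = d₀} :=
    Filter.inter_mem
      (mem_inf_of_left (Filter.inter_mem (mem_nhdsWithin_of_mem_nhds hpre) self_mem_nhdsWithin))
      (mem_inf_of_right (mem_principal_self _))
  obtain ⟨x, ⟨hx1, hx2⟩, hx3⟩ := hB.nonempty_of_mem hmem
  rcases zero_or_pt x with rfl | ⟨c, s, d, rfl⟩
  · exact hx2 rfl
  · rw [Set.mem_setOf_eq, dc_pt] at hx3
    subst hx3
    rw [Set.mem_preimage, pt_mul_pt, g3] at hx1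
    have hzW : (↑(Bruck.mk (c+1) (1:Bicyclic α) 0) : BruckZero (Bicyclic α)) ∈ W := hx1.1
    exact hx1.2 ⟨c+1, hzW, rfl⟩

end Aux11
-- chunk 6 : engine and descent
namespace Aux11

open Filter

variable {α : Ordinal} [TopologicalSpace (BruckZero (Bicyclic α))]
  [T2Space (BruckZero (Bicyclic α))]

theorem pt_eta (b : Bruck (Bicyclic α)) : (↑b : BruckZero (Bicyclic α)) = pt b.1 b.2.1 b.2.2 := rfl

theorem engine (hτ : ShiftContinuous (BruckZero (Bicyclic α)))
    {K V : Set (BruckZero (Bicyclic α))} (hK : IsCompact K)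
    (hV : V ∈ nhds (0 : BruckZero (Bicyclic α))) (hVK : V ⊆ K)
    (y : ℕ → Bruck (Bicyclic α)) (hyK : ∀ n, (↑(y n) : BruckZero (Bicyclic α)) ∈ K)
    (hcmono : StrictMono fun n => (y n).1) (hdge : ∀ n, n ≤ (y n).2.2) :
    ∃ (c₀ : ℕ) (s₀ : Bicyclic α) (D : ℕ), ∀ i : ℕ, pt c₀ s₀ (D + i) ∈ K := by
  classical
  by_contra hcon
  push_neg at hcon
  have hex : ∀ n, ∃ i : ℕ, pt (y n).1 (y n).2.1 ((y n).2.2 + i) ∉ K := fun n =>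
    hcon (y n).1 (y n).2.1 (y n).2.2
  have key : ∀ n, ∃ i : ℕ, pt (y n).1 (y n).2.1 ((y n).2.2 + i) ∈ K ∧
      pt (y n).1 (y n).2.1 ((y n).2.2 + (i + 1)) ∉ K := by
    intro n
    have h00 : pt (y n).1 (y n).2.1 ((y n).2.2 + 0) ∈ K := by
      rw [add_zero, ← pt_eta]
      exact hyK n
    have hpos : 0 < Nat.find (hex n) := by
      rcases Nat.eq_zero_or_pos (Nat.find (hex n)) with h | h
      · exfalso
        have hspec := Nat.find_spec (hex n)
        rw [h] at hspec
        exact hspec h00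
      · exact h
    refine ⟨Nat.find (hex n) - 1, ?_, ?_⟩
    · have hlt : Nat.find (hex n) - 1 < Nat.find (hex n) := by omega
      have := Nat.find_min (hex n) hlt
      rwa [not_not] at this
    · have harith : Nat.find (hex n) - 1 + 1 = Nat.find (hex n) := by omega
      rw [harith]
      exact Nat.find_spec (hex n)
  choose ifn hiK hiBad using key
  set z : ℕ → BruckZero (Bicyclic α) := fun n => pt (y n).1 (y n).2.1 ((y n).2.2 + ifn n)
    with hzdef
  have hzd : ∀ n, n ≤ dc (z n) := by
    intro n
    have h1 : dc (z n) = (y n).2.2 + ifn n := rfl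
    have := hdge n
    omega
  have hdcond : ∀ N : ℕ, {x | x ∈ Set.range z ∧ dc x ≤ N}.Finite := by
    intro N
    apply ((Set.finite_Iic N).image z).subset
    rintro x ⟨⟨n, rfl⟩, hdcx⟩
    exact ⟨n, (hzd n).trans hdcx, rfl⟩
  have hW : (fun x => x * pt (α := α) 0 1 1) ⁻¹' V ∈ nhds (0 : BruckZero (Bicyclic α)) :=
    tendR hτ _ hV
  have hfin := diamondD hτ hK (fun x => by rintro ⟨n, rfl⟩; exact hiK n) hdcond hW
  have hzinj : Function.Injective z := by
    intro a b hab
    apply hcmono.injective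
    have : cc (z a) = cc (z b) := by rw [hab]
    exact this
  have hinf : (Set.range z).Infinite := Set.infinite_range_of_injective hzinj
  have hexn : ∃ n, z n ∈ (fun x => x * pt (α := α) 0 1 1) ⁻¹' V := by
    by_contra hno
    push_neg at hno
    refine hinf (hfin.subset ?_)
    rintro x ⟨n, rfl⟩
    exact ⟨⟨n, rfl⟩, hno n⟩
  obtain ⟨n, hn⟩ := hexn
  rw [Set.mem_preimage] at hn
  have hz : z n * pt (α := α) 0 1 1 = pt (y n).1 (y n).2.1 ((y n).2.2 + (ifn n + 1)) := by
    rw [hzdef]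
    simp only
    rw [pt_mul_pt, g5]
    rfl
  rw [hz] at hn
  exact hiBad n (hVK hn)

theorem descent (hτ : ShiftContinuous (BruckZero (Bicyclic α)))
    {K V : Set (BruckZero (Bicyclic α))} (hK : IsCompact K)
    (hV : V ∈ nhds (0 : BruckZero (Bicyclic α))) (hVK : V ⊆ K) :
    ∀ (r : ℕ) (s₀ : Bicyclic α) (D : ℕ), (∀ i : ℕ, pt r s₀ (D + i) ∈ K) →
      {j : ℕ | pt 0 1 j ∈ V}.Infinite := by
  intro r
  induction r with
  | zero =>
    intro s₀ D htail
    have hBK : Set.range (fun i : ℕ => pt (α := α) 0 s₀ (D + i)) ⊆ K := by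
      rintro x ⟨i, rfl⟩; exact htail i
    have hdcond : ∀ N : ℕ, {x | x ∈ Set.range (fun i : ℕ => pt (α := α) 0 s₀ (D + i)) ∧
        dc x ≤ N}.Finite := by
      intro N
      apply ((Set.finite_Iic N).image _).subset
      rintro x ⟨⟨i, rfl⟩, hdcx⟩
      simp only [dc_pt] at hdcx
      exact ⟨i, (by omega : i ≤ N), rfl⟩
    have hW : (fun x => pt (α := α) 0 1 1 * x) ⁻¹' V ∈ nhds (0 : BruckZero (Bicyclic α)) :=
      tendL hτ _ hV
    have hfin := diamondD hτ hK hBK hdcond hW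
    have hbad : {i : ℕ | pt (α := α) 0 s₀ (D + i) ∉
        (fun x => pt (α := α) 0 1 1 * x) ⁻¹' V}.Finite := by
      apply (hfin.image (fun x => dc x - D)).subset
      intro i hi
      refine ⟨pt 0 s₀ (D + i), ⟨⟨i, rfl⟩, hi⟩, ?_⟩
      simp only [dc_pt]
      omega
    have hgood : ∀ i ∉ {i : ℕ | pt (α := α) 0 s₀ (D + i) ∉
        (fun x => pt (α := α) 0 1 1 * x) ⁻¹' V}, pt (α := α) 0 1 (D + i + 1) ∈ V := by
      intro i hi
      rw [Set.mem_setOf_eq, not_not, Set.mem_preimage, pt_mul_pt, g6b] at hi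
      exact hi
    have hinfc := hbad.infinite_compl
    have himg : ((fun i : ℕ => D + i + 1) '' {i : ℕ | pt (α := α) 0 s₀ (D + i) ∉
        (fun x => pt (α := α) 0 1 1 * x) ⁻¹' V}ᶜ).Infinite :=
      hinfc.image (Set.injOn_of_injective (fun a b hab => by omega))
    refine himg.mono ?_
    rintro j ⟨i, hi, rfl⟩
    exact hgood i hi
  | succ r ih =>
    intro s₀ D htail
    have hBK : Set.range (fun i : ℕ => pt (α := α) (r+1) s₀ (D + i)) ⊆ K := by
      rintro x ⟨i, rfl⟩; exact htail i
    have hdcond : ∀ N : ℕ, {x | x ∈ Set.range (fun i : ℕ => pt (α := α) (r+1) s₀ (D + i)) ∧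
        dc x ≤ N}.Finite := by
      intro N
      apply ((Set.finite_Iic N).image _).subset
      rintro x ⟨⟨i, rfl⟩, hdcx⟩
      simp only [dc_pt] at hdcx
      exact ⟨i, (by omega : i ≤ N), rfl⟩
    have hW : (fun x => pt (α := α) 0 1 1 * x) ⁻¹' V ∈ nhds (0 : BruckZero (Bicyclic α)) :=
      tendL hτ _ hV
    have hfin := diamondD hτ hK hBK hdcond hW
    have hbad : {i : ℕ | pt (α := α) (r+1) s₀ (D + i) ∉
        (fun x => pt (α := α) 0 1 1 * x) ⁻¹' V}.Finite := by
      apply (hfin.image (fun x => dc x - D)).subset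
      intro i hi
      refine ⟨pt (r+1) s₀ (D + i), ⟨⟨i, rfl⟩, hi⟩, ?_⟩
      simp only [dc_pt]
      omega
    obtain ⟨M, hM⟩ := hbad.bddAbove
    refine ih s₀ (D + M + 1) ?_
    intro i
    have hgoodi : pt (α := α) (r+1) s₀ (D + (M + 1 + i)) ∈
        (fun x => pt (α := α) 0 1 1 * x) ⁻¹' V := by
      by_contra hcontra
      have : M + 1 + i ≤ M := hM hcontra
      omega
    rw [Set.mem_preimage, pt_mul_pt, g6a] at hgoodi
    have harith : D + M + 1 + i = D + (M + 1 + i) := by omega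
    rw [harith]
    exact hVK hgoodi

end Aux11
-- chunk 7 : Part I
namespace Aux11

open Filter

variable {α : Ordinal} [TopologicalSpace (BruckZero (Bicyclic α))]
  [T2Space (BruckZero (Bicyclic α))]

theorem partI (hτ : ShiftContinuous (BruckZero (Bicyclic α)))
    (h0 : ¬ IsOpen ({0} : Set (BruckZero (Bicyclic α))))
    {K : Set (BruckZero (Bicyclic α))} (hK : IsCompact K)
    (h0V : (0 : BruckZero (Bicyclic α)) ∈ interior K) :
    {j : ℕ | pt 0 1 j ∈ interior K}.Infinite := by
  classical
  have hVmem : interior K ∈ nhds (0 : BruckZero (Bicyclic α)) :=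
    isOpen_interior.mem_nhds h0V
  have hVK : interior K ⊆ K := interior_subset
  haveI hFne : (𝓝[≠] (0 : BruckZero (Bicyclic α))).NeBot := punct_neBot h0
  by_cases hA : ∃ c₀ : ℕ, ((𝓝[≠] (0 : BruckZero (Bicyclic α))) ⊓ 𝓟 {x | cc x = c₀}).NeBot
  · obtain ⟨c₀, h⟩ := hA
    exact zcaseA hτ h hVmem
  · push_neg at hA
    have hcc : ∀ N : ℕ, {x : BruckZero (Bicyclic α) | N < cc x} ∈
        𝓝[≠] (0 : BruckZero (Bicyclic α)) := by
      intro N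
      have h1 : ∀ c₀ : ℕ, {x : BruckZero (Bicyclic α) | cc x = c₀}ᶜ ∈
          𝓝[≠] (0 : BruckZero (Bicyclic α)) := by
        intro c₀
        have h2 := hA c₀
        rw [inf_principal_eq_bot] at h2
        exact h2
      have h3 : (⋂ c₀ ∈ Finset.range (N+1), {x : BruckZero (Bicyclic α) | cc x = c₀}ᶜ) ∈
          𝓝[≠] (0 : BruckZero (Bicyclic α)) :=
        (Filter.biInter_finset_mem _).mpr (fun c₀ _ => h1 c₀)
      refine Filter.mem_of_superset h3 ?_
      intro x hx
      rw [Set.mem_iInter₂] at hx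
      show N < cc x
      by_contra hle
      push_neg at hle
      exact hx (cc x) (Finset.mem_range.mpr (by omega)) rfl
    by_cases hB : ∃ d₀ : ℕ, ((𝓝[≠] (0 : BruckZero (Bicyclic α))) ⊓ 𝓟 {x | dc x = d₀}).NeBot
    · obtain ⟨d₀, hBne⟩ := hB
      have hWinf : {j : ℕ | pt (α := α) j 1 0 ∈ interior K}.Infinite := wcaseB hτ hBne hVmem
      have hpick : ∀ b prev : ℕ, ∃ j : ℕ, prev < j ∧ pt (α := α) j 1 b ∈ interior K := by
        intro b prev
        have hBK : (fun j : ℕ => pt (α := α) j 1 0) ''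
            {j : ℕ | pt (α := α) j 1 0 ∈ interior K} ⊆ K := by
          rintro x ⟨j, hj, rfl⟩
          exact hVK hj
        have hccond : ∀ N : ℕ, {x | x ∈ (fun j : ℕ => pt (α := α) j 1 0) ''
            {j : ℕ | pt (α := α) j 1 0 ∈ interior K} ∧ cc x ≤ N}.Finite := by
          intro N
          apply ((Set.finite_Iic N).image (fun j : ℕ => pt (α := α) j 1 0)).subset
          rintro x ⟨⟨j, hj, rfl⟩, hccx⟩
          simp only [cc_pt] at hccx
          exact ⟨j, hccx, rfl⟩
        have hW : (fun x => x * pt (α := α) 0 1 b) ⁻¹' interior K ∈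
            nhds (0 : BruckZero (Bicyclic α)) := tendR hτ _ hVmem
        have hfin := diamondC hτ hK hBK hccond hW
        have hbadidx : {j : ℕ | j ∈ {j : ℕ | pt (α := α) j 1 0 ∈ interior K} ∧
            pt (α := α) j 1 b ∉ interior K}.Finite := by
          apply (hfin.image cc).subset
          rintro j ⟨hj1, hj2⟩
          refine ⟨pt j 1 0, ⟨⟨j, hj1, rfl⟩, ?_⟩, rfl⟩
          rw [Set.mem_preimage, pt_mul_pt, g4]
          exact hj2
        have hdiff : ({j : ℕ | pt (α := α) j 1 0 ∈ interior K} \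
            {j : ℕ | j ∈ {j : ℕ | pt (α := α) j 1 0 ∈ interior K} ∧
            pt (α := α) j 1 b ∉ interior K}).Infinite := hWinf.diff hbadidx
        obtain ⟨j, hj, hjgt⟩ := nat_unbounded hdiff prev
        refine ⟨j, hjgt, ?_⟩
        by_contra hnot
        exact hj.2 ⟨hj.1, hnot⟩
      choose f hf1 hf2 using hpick
      set g : ℕ → ℕ := fun b => Nat.rec (f 0 0) (fun b' prev => f (b'+1) prev) b with hgdef
      have hgsucc : ∀ b, g (b+1) = f (b+1) (g b) := fun b => rfl
      have hgmono : StrictMono g := strictMono_nat_of_lt_succ (fun b => by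
        rw [hgsucc]; exact hf1 (b+1) (g b))
      have hgV : ∀ b, pt (α := α) (g b) 1 b ∈ interior K := by
        intro b
        cases b with
        | zero => exact hf2 0 0
        | succ b' => exact hf2 (b'+1) (g b')
      obtain ⟨c₀, s₀, D, htail⟩ := engine hτ hK hVmem hVK
        (fun b => Bruck.mk (g b) 1 b) (fun b => hVK (hgV b)) hgmono (fun n => le_refl n)
      exact descent hτ hK hVmem hVK c₀ s₀ D htail
    · push_neg at hB
      have hdd : ∀ N : ℕ, {x : BruckZero (Bicyclic α) | N < dc x} ∈
          𝓝[≠] (0 : BruckZero (Bicyclic α)) := by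
        intro N
        have h1 : ∀ d₀ : ℕ, {x : BruckZero (Bicyclic α) | dc x = d₀}ᶜ ∈
            𝓝[≠] (0 : BruckZero (Bicyclic α)) := by
          intro d₀
          have h2 := hB d₀
          rw [inf_principal_eq_bot] at h2
          exact h2
        have h3 : (⋂ d₀ ∈ Finset.range (N+1), {x : BruckZero (Bicyclic α) | dc x = d₀}ᶜ) ∈
            𝓝[≠] (0 : BruckZero (Bicyclic α)) :=
          (Filter.biInter_finset_mem _).mpr (fun d₀ _ => h1 d₀)
        refine Filter.mem_of_superset h3 ?_
        intro x hx
        rw [Set.mem_iInter₂] at hx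
        show N < dc x
        by_contra hle
        push_neg at hle
        exact hx (dc x) (Finset.mem_range.mpr (by omega)) rfl
      have hpickC : ∀ n prev : ℕ, ∃ (c : ℕ) (s : Bicyclic α) (d : ℕ),
          pt c s d ∈ interior K ∧ prev < c ∧ n ≤ d := by
        intro n prev
        have hmem : (interior K ∩ {x : BruckZero (Bicyclic α) | prev < cc x}) ∩
            {x : BruckZero (Bicyclic α) | n < dc x} ∈
            𝓝[≠] (0 : BruckZero (Bicyclic α)) :=
          Filter.inter_mem
            (Filter.inter_mem (mem_nhdsWithin_of_mem_nhds hVmem) (hcc prev)) (hdd n)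
        obtain ⟨x, ⟨hx1, hx2⟩, hx3⟩ := hFne.nonempty_of_mem hmem
        rcases zero_or_pt x with rfl | ⟨c, s, d, rfl⟩
        · rw [Set.mem_setOf_eq, cc_zero] at hx2
          omega
        · rw [Set.mem_setOf_eq, cc_pt] at hx2
          rw [Set.mem_setOf_eq, dc_pt] at hx3
          exact ⟨c, s, d, hx1, hx2, by omega⟩
      choose cf sf df hV3 hc3 hd3 using hpickC
      set Y : ℕ → Bruck (Bicyclic α) := fun n => Nat.rec
        (Bruck.mk (cf 0 0) (sf 0 0) (df 0 0))
        (fun n' prev => Bruck.mk (cf (n'+1) prev.1) (sf (n'+1) prev.1) (df (n'+1) prev.1)) n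
        with hYdef
      have hYzero : Y 0 = Bruck.mk (cf 0 0) (sf 0 0) (df 0 0) := rfl
      have hYsucc : ∀ n, Y (n+1) =
          Bruck.mk (cf (n+1) (Y n).1) (sf (n+1) (Y n).1) (df (n+1) (Y n).1) := fun n => rfl
      have hyK : ∀ n, (↑(Y n) : BruckZero (Bicyclic α)) ∈ K := by
        intro n
        cases n with
        | zero => exact hVK (hV3 0 0)
        | succ n' => exact hVK (hV3 (n'+1) (Y n').1)
      have hymono : StrictMono fun n => (Y n).1 := strictMono_nat_of_lt_succ (fun n => by
        have : (Y (n+1)).1 = cf (n+1) (Y n).1 := rfl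
        rw [this]
        exact hc3 (n+1) (Y n).1)
      have hydge : ∀ n, n ≤ (Y n).2.2 := by
        intro n
        cases n with
        | zero => exact Nat.zero_le _
        | succ n' =>
          have : (Y (n'+1)).2.2 = df (n'+1) (Y n').1 := rfl
          rw [this]
          exact hd3 (n'+1) (Y n').1
      obtain ⟨c₀, s₀, D, htail⟩ := engine hτ hK hVmem hVK Y hyK hymono hydge
      exact descent hτ hK hVmem hVK c₀ s₀ D htail

end Aux11
-- chunk 8 : Part II helpers
namespace Aux11

open Filter

variable {α : Ordinal} [TopologicalSpace (BruckZero (Bicyclic α))]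
  [T2Space (BruckZero (Bicyclic α))]

theorem zcof (hτ : ShiftContinuous (BruckZero (Bicyclic α)))
    {K : Set (BruckZero (Bicyclic α))} (hK : IsCompact K)
    (h0V : (0 : BruckZero (Bicyclic α)) ∈ interior K)
    (hZinf : {j : ℕ | pt 0 1 j ∈ interior K}.Infinite) :
    ∃ J : ℕ, ∀ j : ℕ, J ≤ j → pt (α := α) 0 1 j ∈ interior K := by
  have hVmem : interior K ∈ nhds (0 : BruckZero (Bicyclic α)) :=
    isOpen_interior.mem_nhds h0V
  have hVK : interior K ⊆ K := interior_subset
  have hBK : (fun j : ℕ => pt (α := α) 0 1 j) '' {j : ℕ | pt (α := α) 0 1 j ∈ interior K} ⊆ K := by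
    rintro x ⟨j, hj, rfl⟩
    exact hVK hj
  have hdcond : ∀ N : ℕ, {x | x ∈ (fun j : ℕ => pt (α := α) 0 1 j) ''
      {j : ℕ | pt (α := α) 0 1 j ∈ interior K} ∧ dc x ≤ N}.Finite := by
    intro N
    apply ((Set.finite_Iic N).image (fun j : ℕ => pt (α := α) 0 1 j)).subset
    rintro x ⟨⟨j, hj, rfl⟩, hdcx⟩
    simp only [dc_pt] at hdcx
    exact ⟨j, hdcx, rfl⟩
  have hW : (fun x => x * pt (α := α) 0 1 1) ⁻¹' interior K ∈
      nhds (0 : BruckZero (Bicyclic α)) := tendR hτ _ hVmem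
  have hfin := diamondD hτ hK hBK hdcond hW
  have hbadidx : {j : ℕ | j ∈ {j : ℕ | pt (α := α) 0 1 j ∈ interior K} ∧
      pt (α := α) 0 1 (j+1) ∉ interior K}.Finite := by
    apply (hfin.image dc).subset
    rintro j ⟨hj1, hj2⟩
    refine ⟨pt 0 1 j, ⟨⟨j, hj1, rfl⟩, ?_⟩, rfl⟩
    rw [Set.mem_preimage, pt_mul_pt, g5]
    exact hj2
  obtain ⟨M, hM⟩ := hbadidx.bddAbove
  obtain ⟨j₀, hj₀, hgt⟩ := nat_unbounded hZinf M
  refine ⟨j₀, ?_⟩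
  intro j hj
  induction j, hj using Nat.le_induction with
  | base => exact hj₀
  | succ j hle ih =>
    by_contra hnot
    have : j ≤ M := hM ⟨ih, hnot⟩
    omega

theorem Efin (hτ : ShiftContinuous (BruckZero (Bicyclic α)))
    {K : Set (BruckZero (Bicyclic α))} (hK : IsCompact K)
    (h0V : (0 : BruckZero (Bicyclic α)) ∈ interior K)
    {J : ℕ} (hJ : ∀ j : ℕ, J ≤ j → pt (α := α) 0 1 j ∈ interior K)
    (s : Bicyclic α) : {j : ℕ | pt (α := α) 0 s j ∉ interior K}.Finite := by
  have hVmem : interior K ∈ nhds (0 : BruckZero (Bicyclic α)) :=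
    isOpen_interior.mem_nhds h0V
  have hVK : interior K ⊆ K := interior_subset
  have hBK : Set.range (fun i : ℕ => pt (α := α) 0 1 (J + i)) ⊆ K := by
    rintro x ⟨i, rfl⟩
    exact hVK (hJ (J + i) (by omega))
  have hdcond : ∀ N : ℕ, {x | x ∈ Set.range (fun i : ℕ => pt (α := α) 0 1 (J + i)) ∧
      dc x ≤ N}.Finite := by
    intro N
    apply ((Set.finite_Iic N).image (fun i : ℕ => pt (α := α) 0 1 (J + i))).subset
    rintro x ⟨⟨i, rfl⟩, hdcx⟩
    simp only [dc_pt] at hdcx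
    exact ⟨i, (by omega : i ≤ N), rfl⟩
  have hW : (fun x => pt (α := α) 0 s 0 * x) ⁻¹' interior K ∈
      nhds (0 : BruckZero (Bicyclic α)) := tendL hτ _ hVmem
  have hfin := diamondD hτ hK hBK hdcond hW
  have hbad : {i : ℕ | pt (α := α) 0 s (J + i) ∉ interior K}.Finite := by
    apply (hfin.image (fun x => dc x - J)).subset
    intro i hi
    refine ⟨pt 0 1 (J + i), ⟨⟨i, rfl⟩, ?_⟩, ?_⟩
    · rw [Set.mem_preimage, pt_mul_pt, g10]
      exact hi
    · simp only [dc_pt]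
      omega
  apply ((Set.finite_Iic J).union (hbad.image (fun i => J + i))).subset
  intro j hj
  rcases le_or_gt j J with h | h
  · exact Set.mem_union_left _ h
  · refine Set.mem_union_right _ ⟨j - J, ?_, show J + (j - J) = j by omega⟩
    have harith : J + (j - J) = j := by omega
    rw [Set.mem_setOf_eq, harith]
    exact hj

end Aux11

/-- For a locally compact Hausdorff shift-continuous topology on
`B⁰(B_k)` with non-isolated zero, each open neighborhood `U` of `0*` contains the
whole box `[0,m]` for all sufficiently large `m`. -/
theorem zero_row_boxes_eventually_contained (k : ℕ)
    [TopologicalSpace (BruckZero (Bicyclic k))] [T2Space (BruckZero (Bicyclic k))]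
    [LocallyCompactSpace (BruckZero (Bicyclic k))]
    (hτ : ShiftContinuous (BruckZero (Bicyclic k)))
    (h0 : ¬ IsOpen ({0} : Set (BruckZero (Bicyclic k))))
    (U : Set (BruckZero (Bicyclic k)))
    (hU : IsOpen U) (h0U : (0 : BruckZero (Bicyclic k)) ∈ U) :
    ∃ nU : ℕ, ∀ m : ℕ, nU < m → box (Bicyclic k) 0 m ⊆ U := by
  classical
  open Aux11 in
  by_contra hcon
  push_neg at hcon
  have hbad : ∀ N : ℕ, ∃ m : ℕ, N < m ∧ ∃ s : Bicyclic k, Aux11.pt 0 s m ∉ U := by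
    intro N
    obtain ⟨m, hm, hsub⟩ := hcon N
    rw [Set.not_subset] at hsub
    obtain ⟨x, hxbox, hxU⟩ := hsub
    obtain ⟨s, rfl⟩ := hxbox
    exact ⟨m, hm, s, hxU⟩
  obtain ⟨K, hK, h0V, hKU⟩ := exists_compact_subset hU h0U
  have hVmem : interior K ∈ nhds (0 : BruckZero (Bicyclic k)) :=
    isOpen_interior.mem_nhds h0V
  have hVK : interior K ⊆ K := interior_subset
  have hVU : interior K ⊆ U := hVK.trans hKU
  have hZinf := Aux11.partI hτ h0 hK h0V
  obtain ⟨J, hJ⟩ := Aux11.zcof hτ hK h0V hZinf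
  have hE : ∀ s : Bicyclic k, {j : ℕ | Aux11.pt 0 s j ∉ interior K}.Finite :=
    fun s => Aux11.Efin hτ hK h0V hJ s
  -- the "last escape" construction
  have hstep : ∀ N : ℕ, ∃ (s : Bicyclic k) (e : ℕ), N < e ∧
      Aux11.pt 0 s (e+1) ∈ interior K ∧ Aux11.pt 0 s e ∉ interior K := by
    intro N
    obtain ⟨m, hm, s, hsU⟩ := hbad N
    have hsV : Aux11.pt 0 s m ∉ interior K := fun h => hsU (hVU h)
    obtain ⟨e, heE, hemax⟩ := (hE s).exists_maximalFor id _ ⟨m, hsV⟩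
    have hmax : ∀ a ∈ {j : ℕ | Aux11.pt 0 s j ∉ interior K}, a ≤ e := by
      intro a ha
      by_contra hgt
      push_neg at hgt
      have h5 := hemax ha (le_of_lt hgt)
      simp only [id_eq] at h5
      omega
    refine ⟨s, e, by have := hmax m hsV; omega, ?_, heE⟩
    by_contra hnot
    have := hmax (e+1) hnot
    omega
  choose sfn efn h1 h2 h3 using hstep
  -- iterate
  set Nf : ℕ → ℕ := fun i => Nat.rec 0 (fun _ prev => efn prev) i with hNdef
  have hNsucc : ∀ i, Nf (i+1) = efn (Nf i) := fun i => rfl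
  have hNmono : ∀ i, Nf i < Nf (i+1) := by
    intro i
    cases i with
    | zero => exact h1 0
    | succ i' => exact h1 (Nf (i'+1))
  have hNge : ∀ i, i ≤ Nf i := by
    intro i
    induction i with
    | zero => exact Nat.le_refl 0
    | succ i' ih => have := hNmono i'; omega
  set xf : ℕ → BruckZero (Bicyclic k) := fun i => Aux11.pt 0 (sfn (Nf i)) (efn (Nf i) + 1)
    with hxdef
  have hxV : ∀ i, xf i ∈ interior K := fun i => h2 (Nf i)
  have hxdc : ∀ i, dc (xf i) = Nf (i+1) + 1 := fun i => rfl
  have hdcond : ∀ M : ℕ, {x | x ∈ Set.range xf ∧ dc x ≤ M}.Finite := by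
    intro M
    apply ((Set.finite_Iic M).image xf).subset
    rintro x ⟨⟨i, rfl⟩, hdcx⟩
    rw [hxdc] at hdcx
    have := hNge (i+1)
    exact ⟨i, (by omega : i ≤ M), rfl⟩
  have hW : (fun x => x * Aux11.pt (α := (k : Ordinal)) 1 1 0) ⁻¹' interior K ∈
      nhds (0 : BruckZero (Bicyclic k)) := Aux11.tendR hτ _ hVmem
  have hfin := Aux11.diamondD hτ hK (by rintro x ⟨i, rfl⟩; exact hVK (hxV i)) hdcond hW
  have hnoW : ∀ i, xf i ∉ (fun x => x * Aux11.pt (α := (k : Ordinal)) 1 1 0) ⁻¹' interior K := by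
    intro i hmem
    rw [Set.mem_preimage, hxdef] at hmem
    simp only at hmem
    rw [Aux11.pt_mul_pt, Aux11.g7] at hmem
    exact h3 (Nf i) hmem
  have hNfmono : StrictMono Nf := strictMono_nat_of_lt_succ hNmono
  have hxinj : Function.Injective xf := by
    intro a b hab
    have hdce : Nf (a+1) + 1 = Nf (b+1) + 1 := by
      have h := congrArg dc hab
      rw [hxdc, hxdc] at h
      exact h
    have h7 : Nf (a+1) = Nf (b+1) := by omega
    have h6 : a + 1 = b + 1 := hNfmono.injective h7
    omega
  have hinf : (Set.range xf).Infinite := Set.infinite_range_of_injective hxinj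
  refine hinf (hfin.subset ?_)
  rintro x ⟨i, rfl⟩
  exact ⟨⟨i, rfl⟩, hnoW i⟩
end
end

section
/- Let k be a non-negative integer and let τ be a locally compact Hausdorff shift-continuous topology on B⁰(B_k) in which the adjoined zero 0* is not isolated. Then every open neighborhood U of 0* contains all but finitely many of the boxes [n,m], i.e., the set of pairs (n,m) of non-negative integers with [n,m] ⊄ U is finite. -/
open Ordinal Set Topology

noncomputable section

namespace BP
variable {α : Ordinal}

theorem bic_mul_val (x y : Bicyclic α) : (x * y).val =
    if x.val.2 ≤ y.val.1 then (x.val.1 + (y.val.1 - x.val.2), y.val.2)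
    else (x.val.1, y.val.2 + (x.val.2 - y.val.1)) := by
  show (Mul.mul x y).val = _
  unfold Mul.mul Bicyclic.instMul
  dsimp only
  split_ifs with h <;> simp [h]

theorem bic_one_val : ((1 : Bicyclic α)).val = ((0:Ordinal), (0:Ordinal)) := rfl

theorem bic_one_mul (t : Bicyclic α) : (1 : Bicyclic α) * t = t := by
  apply Subtype.ext
  rw [bic_mul_val]
  rw [if_pos (by rw [bic_one_val]; exact zero_le)]
  simp [bic_one_val, Ordinal.sub_zero]

theorem bic_mul_one (t : Bicyclic α) : t * (1 : Bicyclic α) = t := by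
  apply Subtype.ext
  rw [bic_mul_val]
  by_cases h : t.val.2 ≤ ((1:Bicyclic α)).val.1
  · rw [if_pos h]
    have h0 : t.val.2 = 0 := le_antisymm h (zero_le)
    simp only [bic_one_val, h0, Ordinal.sub_zero, Ordinal.sub_self, add_zero]
    exact Prod.ext rfl h0.symm
  · rw [if_neg h]
    simp [bic_one_val, Ordinal.sub_zero]

theorem bruck_mul (n m c d : ℕ) (s t : Bicyclic α) :
    (Bruck.mk n s m * Bruck.mk c t d : Bruck (Bicyclic α)) =
    if m < c then Bruck.mk (n + c - m) t d
    else if c < m then Bruck.mk n s (d + m - c)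
    else Bruck.mk n (s * t) d := rfl

end BP

namespace BP2
open BP
variable {α : Ordinal}

/-- the identity of the Bruck extension -/
def εB : Bruck (Bicyclic α) := Bruck.mk 0 1 0

theorem mul_eps (y : Bruck (Bicyclic α)) : y * εB = y := by
  obtain ⟨n, s, m⟩ := y
  show (Bruck.mk n s m * Bruck.mk 0 1 0 : Bruck (Bicyclic α)) = Bruck.mk n s m
  rw [bruck_mul]
  rcases Nat.eq_zero_or_pos m with hm | hm
  · subst hm
    simp [bic_mul_one]
  · rw [if_neg (by omega), if_pos hm]
    congr 1 <;> omega

theorem eps_mul (y : Bruck (Bicyclic α)) : εB * y = y := by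
  obtain ⟨n, s, m⟩ := y
  show (Bruck.mk 0 1 0 * Bruck.mk n s m : Bruck (Bicyclic α)) = Bruck.mk n s m
  rw [bruck_mul]
  rcases Nat.eq_zero_or_pos n with hn | hn
  · subst hn
    simp [bic_one_mul]
  · rw [if_pos hn]
    congr 1
    omega

theorem up1 (p q : ℕ) (t : Bicyclic α) :
    (Bruck.mk 1 1 0 * Bruck.mk p t q : Bruck (Bicyclic α)) = Bruck.mk (p+1) t q := by
  rw [bruck_mul]
  rcases Nat.eq_zero_or_pos p with hp | hp
  · subst hp; simp [bic_one_mul]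
  · rw [if_pos hp]; congr 1; omega

theorem dn1 (p q : ℕ) (t : Bicyclic α) (hp : 1 ≤ p) :
    (Bruck.mk 0 1 1 * Bruck.mk p t q : Bruck (Bicyclic α)) = Bruck.mk (p-1) t q := by
  rw [bruck_mul]
  rcases Nat.lt_or_ge 1 p with hp' | hp'
  · rw [if_pos hp']; congr 1; omega
  · have : p = 1 := by omega
    subst this
    simp [bic_one_mul]

theorem up2 (p q : ℕ) (t : Bicyclic α) :
    (Bruck.mk p t q * Bruck.mk 0 1 1 : Bruck (Bicyclic α)) = Bruck.mk p t (q+1) := by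
  rw [bruck_mul]
  rcases Nat.eq_zero_or_pos q with hq | hq
  · subst hq; simp [bic_mul_one]
  · rw [if_neg (by omega), if_pos hq]; congr 1; omega

theorem dn2 (p q : ℕ) (t : Bicyclic α) (hq : 1 ≤ q) :
    (Bruck.mk p t q * Bruck.mk 1 1 0 : Bruck (Bicyclic α)) = Bruck.mk p t (q-1) := by
  rw [bruck_mul]
  rcases Nat.lt_or_ge 1 q with hq' | hq'
  · rw [if_neg (by omega), if_pos hq']; congr 1; omega
  · have : q = 1 := by omega
    subst this
    simp [bic_mul_one]

/-- equal-case multiplication: row transport -/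
theorem eqmidL (n c q : ℕ) (a t : Bicyclic α) :
    (Bruck.mk n a c * Bruck.mk c t q : Bruck (Bicyclic α)) = Bruck.mk n (a*t) q := by
  rw [bruck_mul]; simp

/-- left multiplication by an idempotent fixes far boxes -/
theorem fixL (c p q : ℕ) (t : Bicyclic α) (h : c ≤ p) :
    (Bruck.mk c 1 c * Bruck.mk p t q : Bruck (Bicyclic α)) = Bruck.mk p t q := by
  rw [bruck_mul]
  rcases Nat.lt_or_ge c p with h' | h'
  · rw [if_pos h']; congr 1; omega
  · have : p = c := by omega
    subst this
    simp [bic_one_mul]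

theorem fixR (c p q : ℕ) (t : Bicyclic α) (h : c ≤ q) :
    (Bruck.mk p t q * Bruck.mk c 1 c : Bruck (Bicyclic α)) = Bruck.mk p t q := by
  rw [bruck_mul]
  rcases Nat.lt_or_ge c q with h' | h'
  · rw [if_neg (by omega), if_pos h']; congr 1; omega
  · have : q = c := by omega
    subst this
    simp [bic_mul_one]

/-- left collapse: moves the box when p < c -/
theorem movL (c p q : ℕ) (a : Bicyclic α) (t : Bicyclic α) (h : p < c) :
    (Bruck.mk 0 a c * Bruck.mk p t q : Bruck (Bicyclic α)) = Bruck.mk 0 a (q + c - p) := by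
  rw [bruck_mul]
  rw [if_neg (by omega), if_pos h]

theorem movL' (c p q : ℕ) (a : Bicyclic α) (t : Bicyclic α) (h : p < c) :
    (Bruck.mk c a c * Bruck.mk p t q : Bruck (Bicyclic α)) = Bruck.mk c a (q + c - p) := by
  rw [bruck_mul]
  rw [if_neg (by omega), if_pos h]

theorem movR' (c p q : ℕ) (a : Bicyclic α) (t : Bicyclic α) (h : q < c) :
    (Bruck.mk p t q * Bruck.mk c a c : Bruck (Bicyclic α)) = Bruck.mk (p + c - q) a c := by
  rw [bruck_mul]
  rw [if_pos h]

/-- bisimplicity helpers -/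
theorem absorbL (s t : Bicyclic α) :
    (Bicyclic.mk s.val.1 t.val.1 s.property.1 t.property.1 * t) =
      Bicyclic.mk s.val.1 t.val.2 s.property.1 t.property.2 := by
  apply Subtype.ext
  rw [bic_mul_val]
  simp only [Bicyclic.mk]
  simp only [le_refl, ↓reduceIte]
  simp [Ordinal.sub_self]

theorem absorbR (s t : Bicyclic α) :
    (Bicyclic.mk s.val.1 t.val.2 s.property.1 t.property.2 *
      Bicyclic.mk t.val.2 s.val.2 t.property.2 s.property.2) = s := by
  apply Subtype.ext
  rw [bic_mul_val]
  simp only [Bicyclic.mk]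
  simp only [le_refl, ↓reduceIte]
  simp [Ordinal.sub_self]

end BP2

namespace BP3
open BP BP2
variable {α : Ordinal}

def pt (n : ℕ) (t : Bicyclic α) (m : ℕ) : BruckZero (Bicyclic α) :=
  ((Bruck.mk n t m : Bruck (Bicyclic α)) : BruckZero (Bicyclic α))

theorem shiftL_coe (u y : Bruck (Bicyclic α)) :
    ((u : BruckZero (Bicyclic α)) * ↑y * ↑(εB (α := α))) = ↑(u * y) := by
  rw [← WithZero.coe_mul, ← WithZero.coe_mul, mul_eps]

theorem shiftR_coe (v y : Bruck (Bicyclic α)) :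
    ((↑(εB (α := α)) : BruckZero (Bicyclic α)) * ↑y * ↑v) = ↑(y * v) := by
  rw [← WithZero.coe_mul, ← WithZero.coe_mul, eps_mul]

theorem shift_zero (u v : Bruck (Bicyclic α)) :
    ((u : BruckZero (Bicyclic α)) * 0 * ↑v) = 0 := by simp

theorem pt_mem_box (n m : ℕ) (t : Bicyclic α) : pt n t m ∈ box (Bicyclic α) n m :=
  ⟨t, rfl⟩

theorem pt_ne_zero (n m : ℕ) (t : Bicyclic α) : pt n t m ≠ 0 :=
  WithZero.coe_ne_zero

def Supp (C : Set (BruckZero (Bicyclic α))) : Set (ℕ × ℕ) :=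
  {p | (C ∩ box (Bicyclic α) p.1 p.2).Nonempty}

section Top
variable [TopologicalSpace (BruckZero (Bicyclic α))]
  [T2Space (BruckZero (Bicyclic α))]

theorem isolate (hτ : ShiftContinuous (BruckZero (Bicyclic α)))
    (x : BruckZero (Bicyclic α)) (hx : x ≠ 0) :
    ∃ O : Set (BruckZero (Bicyclic α)), IsOpen O ∧ x ∈ O ∧ (Supp O).Finite := by
  obtain ⟨b, rfl⟩ : ∃ b : Bruck (Bicyclic α), x = ↑b := by
    obtain ⟨a, ha⟩ := WithZero.ne_zero_iff_exists.mp hx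
    exact ⟨a, ha.symm⟩
  obtain ⟨n, s, m⟩ := b
  have hbm : (n, s, m) = Bruck.mk n s m := rfl
  rw [hbm]
  set w : BruckZero (Bicyclic α) := ↑(Bruck.mk (n+1) (1 : Bicyclic α) (m+1)) with hw
  set d1 : BruckZero (Bicyclic α) → BruckZero (Bicyclic α) :=
    fun z => ↑(Bruck.mk (n+1) (1 : Bicyclic α) (n+1)) * z * ↑(εB (α := α)) with hd1
  set d2 : BruckZero (Bicyclic α) → BruckZero (Bicyclic α) :=
    fun z => ↑(εB (α := α)) * z * ↑(Bruck.mk (m+1) (1 : Bicyclic α) (m+1)) with hd2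
  have hc1 : Continuous d1 := hτ _ _
  have hc2 : Continuous d2 := hτ _ _
  have hd1x : d1 ↑(Bruck.mk n s m) = w := by
    rw [hd1]
    simp only
    rw [shiftL_coe, movL' (n+1) n m 1 s (by omega)]
    have h5 : m + (n+1) - n = m + 1 := by omega
    rw [h5]
  have hd2x : d2 ↑(Bruck.mk n s m) = w := by
    rw [hd2]
    simp only
    rw [shiftR_coe, movR' (m+1) n m 1 s (by omega)]
    have h5 : n + (m+1) - m = n + 1 := by omega
    rw [h5]
  have hxw : (↑(Bruck.mk n s m) : BruckZero (Bicyclic α)) ≠ w := by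
    rw [hw]
    intro h
    have := WithZero.coe_inj.mp h
    have := congrArg (fun z : Bruck (Bicyclic α) => z.1) this
    simp only [Bruck.mk] at this
    omega
  obtain ⟨A, A', hA, hA', hxA, hwA', hAA'⟩ := t2_separation hxw
  refine ⟨A ∩ (d1 ⁻¹' A') ∩ (d2 ⁻¹' A'),
    (hA.inter (hA'.preimage hc1)).inter (hA'.preimage hc2),
    ⟨⟨hxA, by simp only [Set.mem_preimage, hd1x]; exact hwA'⟩,
      by simp only [Set.mem_preimage, hd2x]; exact hwA'⟩, ?_⟩
  apply Set.Finite.subset ((Set.finite_Iic n).prod (Set.finite_Iic m))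
  rintro ⟨p, q⟩ ⟨y, ⟨⟨hyA, hy1⟩, hy2⟩, t, rfl⟩
  dsimp only at hyA hy1 hy2
  simp only [Set.mem_prod, Set.mem_Iic]
  constructor
  · by_contra hp
    have heq : d1 ↑(Bruck.mk p t q) = ↑(Bruck.mk p t q) := by
      rw [hd1]; simp only
      rw [shiftL_coe, fixL (n+1) p q t (by omega)]
    have hyA' : (↑(Bruck.mk p t q) : BruckZero (Bicyclic α)) ∈ A' := by
      have h6 := Set.mem_preimage.mp hy1
      rwa [heq] at h6
    exact Set.disjoint_left.mp hAA' hyA hyA'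
  · by_contra hq
    have heq : d2 ↑(Bruck.mk p t q) = ↑(Bruck.mk p t q) := by
      rw [hd2]; simp only
      rw [shiftR_coe, fixR (m+1) p q t (by omega)]
    have hyA' : (↑(Bruck.mk p t q) : BruckZero (Bicyclic α)) ∈ A' := by
      have h6 := Set.mem_preimage.mp hy2
      rwa [heq] at h6
    exact Set.disjoint_left.mp hAA' hyA hyA'

theorem suppFin (hτ : ShiftContinuous (BruckZero (Bicyclic α)))
    (C : Set (BruckZero (Bicyclic α))) (hC : IsCompact C)
    (h0C : (0 : BruckZero (Bicyclic α)) ∉ C) : (Supp C).Finite := by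
  have hiso : ∀ x : BruckZero (Bicyclic α),
      ∃ O : Set (BruckZero (Bicyclic α)), IsOpen O ∧ x ∈ O ∧ (x ≠ 0 → (Supp O).Finite) := by
    intro x
    by_cases hx : x = 0
    · exact ⟨Set.univ, isOpen_univ, Set.mem_univ _, fun h => absurd hx h⟩
    · obtain ⟨O, h1, h2, h3⟩ := isolate hτ x hx
      exact ⟨O, h1, h2, fun _ => h3⟩
  choose O hOopen hOmem hOfin using hiso
  obtain ⟨t, htC, htcov⟩ := hC.elim_nhds_subcover O (fun x _ => (hOopen x).mem_nhds (hOmem x))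
  apply Set.Finite.subset
    (Set.Finite.biUnion t.finite_toSet
      (fun x hx => hOfin x (fun h0 => h0C (h0 ▸ htC x hx))))
  rintro p ⟨y, hyC, hybox⟩
  obtain ⟨x, hxt, hyO⟩ := Set.mem_iUnion₂.mp (htcov hyC)
  exact Set.mem_biUnion hxt ⟨y, hyO, hybox⟩

theorem shield (hτ : ShiftContinuous (BruckZero (Bicyclic α)))
    (K V : Set (BruckZero (Bicyclic α))) (hK : IsCompact K) (hV : IsOpen V)
    (h0V : (0 : BruckZero (Bicyclic α)) ∈ V) (u v : Bruck (Bicyclic α)) :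
    ∃ S : Set (ℕ × ℕ), S.Finite ∧ ∀ p : ℕ × ℕ, p ∉ S → ∀ y ∈ K,
      y ∈ box (Bicyclic α) p.1 p.2 → ((u : BruckZero (Bicyclic α)) * y * ↑v) ∈ V := by
  set σ : BruckZero (Bicyclic α) → BruckZero (Bicyclic α) := fun z => ↑u * z * ↑v with hσ
  have hc : Continuous σ := hτ _ _
  set C := K \ σ ⁻¹' V with hCdef
  have hCc : IsCompact C := hK.diff (hV.preimage hc)
  have h0C : (0 : BruckZero (Bicyclic α)) ∉ C := by
    intro h
    apply h.2
    show σ 0 ∈ V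
    rw [hσ]
    simp only
    rw [shift_zero]
    exact h0V
  refine ⟨Supp C, suppFin hτ C hCc h0C, ?_⟩
  intro p hp y hyK hybox
  by_contra hnot
  exact hp ⟨y, ⟨hyK, hnot⟩, hybox⟩

theorem bnd (S : Set (ℕ × ℕ)) (hf : S.Finite) : ∃ b : ℕ, ∀ x ∈ S, x.1 ≤ b ∧ x.2 ≤ b := by
  obtain ⟨b1, hb1⟩ := (hf.image Prod.fst).bddAbove
  obtain ⟨b2, hb2⟩ := (hf.image Prod.snd).bddAbove
  exact ⟨max b1 b2, fun x hx =>
    ⟨le_trans (hb1 (Set.mem_image_of_mem _ hx)) (le_max_left _ _),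
     le_trans (hb2 (Set.mem_image_of_mem _ hx)) (le_max_right _ _)⟩⟩

theorem pt_def (n m : ℕ) (t : Bicyclic α) :
    pt n t m = ((Bruck.mk n t m : Bruck (Bicyclic α)) : BruckZero (Bicyclic α)) := rfl

theorem aux_main [LocallyCompactSpace (BruckZero (Bicyclic α))]
    (hτ : ShiftContinuous (BruckZero (Bicyclic α)))
    (h0 : ¬ IsOpen ({0} : Set (BruckZero (Bicyclic α))))
    (U : Set (BruckZero (Bicyclic α)))
    (hU : IsOpen U) (h0U : (0 : BruckZero (Bicyclic α)) ∈ U) :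
    {p : ℕ × ℕ | ¬ box (Bicyclic α) p.1 p.2 ⊆ U}.Finite := by
  classical
  obtain ⟨K, hK𝓝, hKU, hKc⟩ := local_compact_nhds (hU.mem_nhds h0U)
  set V := interior K with hVdef
  have hVopen : IsOpen V := isOpen_interior
  have h0V : (0 : BruckZero (Bicyclic α)) ∈ V := mem_interior_iff_mem_nhds.mpr hK𝓝
  have hVK : V ⊆ K := interior_subset
  -- the four unit-translation shields
  obtain ⟨S1, hS1f, hS1⟩ := shield hτ K V hKc hVopen h0V (Bruck.mk 1 1 0) εB
  obtain ⟨S2, hS2f, hS2⟩ := shield hτ K V hKc hVopen h0V εB (Bruck.mk 0 1 1)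
  obtain ⟨S3, hS3f, hS3⟩ := shield hτ K V hKc hVopen h0V (Bruck.mk 0 1 1) εB
  obtain ⟨S4, hS4f, hS4⟩ := shield hτ K V hKc hVopen h0V εB (Bruck.mk 1 1 0)
  obtain ⟨B1, hB1⟩ := bnd S1 hS1f
  obtain ⟨B2, hB2⟩ := bnd S2 hS2f
  obtain ⟨B3, hB3⟩ := bnd S3 hS3f
  obtain ⟨B4, hB4⟩ := bnd S4 hS4f
  set B := max (max B1 B2) (max B3 B4) with hBdef
  -- propagation lemmas
  have PU1 : ∀ (a b : ℕ) (t : Bicyclic α), (a, b) ∉ S1 → pt a t b ∈ K → pt (a+1) t b ∈ V := by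
    intro a b t hp hKm
    have h := hS1 (a, b) hp _ hKm (pt_mem_box _ _ _)
    rwa [pt_def, shiftL_coe, up1] at h
  have PU2 : ∀ (a b : ℕ) (t : Bicyclic α), (a, b) ∉ S2 → pt a t b ∈ K → pt a t (b+1) ∈ V := by
    intro a b t hp hKm
    have h := hS2 (a, b) hp _ hKm (pt_mem_box _ _ _)
    rwa [pt_def, shiftR_coe, up2] at h
  have PD1 : ∀ (a b : ℕ) (t : Bicyclic α), 1 ≤ a → (a, b) ∉ S3 → pt a t b ∈ K →
      pt (a-1) t b ∈ V := by
    intro a b t ha hp hKm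
    have h := hS3 (a, b) hp _ hKm (pt_mem_box _ _ _)
    rwa [pt_def, shiftL_coe, dn1 _ _ _ ha] at h
  have PD2 : ∀ (a b : ℕ) (t : Bicyclic α), 1 ≤ b → (a, b) ∉ S4 → pt a t b ∈ K →
      pt a t (b-1) ∈ V := by
    intro a b t hb hp hKm
    have h := hS4 (a, b) hp _ hKm (pt_mem_box _ _ _)
    rwa [pt_def, shiftR_coe, dn2 _ _ _ hb] at h
  -- region navigation
  have R1 : ∀ (t : Bicyclic α) (a b : ℕ), B < b → pt a t b ∈ K → ∀ j, pt (a+j) t b ∈ K := by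
    intro t a b hb h j
    induction j with
    | zero => simpa using h
    | succ j ih =>
      have hnot : (a+j, b) ∉ S1 := fun hin => by have := (hB1 _ hin).2; omega
      exact hVK (PU1 (a+j) b t hnot ih)
  have R3 : ∀ (t : Bicyclic α) (a b j : ℕ), B < b → pt (a+j) t b ∈ K → pt a t b ∈ K := by
    intro t a b j hb h
    induction j with
    | zero => simpa using h
    | succ j ih =>
      apply ih
      have hnot : (a+j+1, b) ∉ S3 := fun hin => by have := (hB3 _ hin).2; omega
      have h2 := PD1 (a+j+1) b t (by omega) hnot (by rwa [Nat.add_assoc])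
      have h3 : a + j + 1 - 1 = a + j := by omega
      rw [h3] at h2
      exact hVK h2
  have R2 : ∀ (t : Bicyclic α) (a b : ℕ), B < a → pt a t b ∈ K → ∀ j, pt a t (b+j) ∈ K := by
    intro t a b ha h j
    induction j with
    | zero => simpa using h
    | succ j ih =>
      have hnot : (a, b+j) ∉ S2 := fun hin => by have := (hB2 _ hin).1; omega
      exact hVK (PU2 a (b+j) t hnot ih)
  have R4 : ∀ (t : Bicyclic α) (a b j : ℕ), B < a → pt a t (b+j) ∈ K → pt a t b ∈ K := by
    intro t a b j ha h
    induction j with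
    | zero => simpa using h
    | succ j ih =>
      apply ih
      have hnot : (a, b+j+1) ∉ S4 := fun hin => by have := (hB4 _ hin).1; omega
      have h2 := PD2 a (b+j+1) t (by omega) hnot (by rwa [Nat.add_assoc])
      have h3 : b + j + 1 - 1 = b + j := by omega
      rw [h3] at h2
      exact hVK h2
  -- adjust a single coordinate arbitrarily, provided the other one is beyond B
  have adjust1 : ∀ (t : Bicyclic α) (a b : ℕ), B < b → pt a t b ∈ K → ∀ x, pt x t b ∈ K := by
    intro t a b hb h x
    rcases le_or_gt a x with hax | hxa
    · obtain ⟨j, rfl⟩ : ∃ j, x = a + j := ⟨x - a, by omega⟩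
      exact R1 t a b hb h j
    · have hax' : a = x + (a - x) := by omega
      exact R3 t x b (a - x) hb (by rw [← hax']; exact h)
  have adjust2 : ∀ (t : Bicyclic α) (a b : ℕ), B < a → pt a t b ∈ K → ∀ y, pt a t y ∈ K := by
    intro t a b ha h y
    rcases le_or_gt b y with hby | hyb
    · obtain ⟨j, rfl⟩ : ∃ j, y = b + j := ⟨y - b, by omega⟩
      exact R2 t a b ha h j
    · have hby' : b = y + (b - y) := by omega
      exact R4 t a y (b - y) ha (by rw [← hby']; exact h)
  -- region lemma
  have RL : ∀ (t : Bicyclic α) (a b : ℕ), pt a t b ∈ K → (B < a ∨ B < b) →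
      ∀ x y, B < x → B < y → pt x t y ∈ K := by
    intro t a b h hab x y hx hy
    rcases hab with ha | hb
    · exact adjust1 t a y hy (adjust2 t a b ha h y) x
    · exact adjust2 t x b hx (adjust1 t a b hb h x) y
  -- single-box avoidance neighbourhoods of zero
  have collapse_avoid : ∀ p : ℕ × ℕ, ∃ Np : Set (BruckZero (Bicyclic α)),
      IsOpen Np ∧ (0 : BruckZero (Bicyclic α)) ∈ Np ∧
      ∀ y ∈ Np, y ∉ box (Bicyclic α) p.1 p.2 := by
    intro p
    set σ : BruckZero (Bicyclic α) → BruckZero (Bicyclic α) :=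
      fun z => ↑(Bruck.mk 0 (1 : Bicyclic α) (p.1+1)) * z * ↑(εB (α := α)) with hσ
    have hc : Continuous σ := hτ _ _
    set w : BruckZero (Bicyclic α) := pt 0 1 (p.2+1) with hw
    refine ⟨σ ⁻¹' (({w} : Set (BruckZero (Bicyclic α)))ᶜ), (isOpen_compl_singleton).preimage hc, ?_, ?_⟩
    · show σ 0 ∈ (({w} : Set (BruckZero (Bicyclic α)))ᶜ)
      rw [hσ]
      simp only
      rw [shift_zero]
      exact (pt_ne_zero _ _ _).symm
    · rintro y hy ⟨t, rfl⟩
      apply hy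
      show σ _ ∈ ({w} : Set (BruckZero (Bicyclic α)))
      rw [hσ]
      simp only
      rw [shiftL_coe, movL (p.1+1) p.1 p.2 1 t (by omega)]
      have h5 : p.2 + (p.1+1) - p.1 = p.2 + 1 := by omega
      rw [h5]
      rfl
  -- seed: a middle far out in V
  have seed : ∃ (a b : ℕ) (t : Bicyclic α), (B < a ∨ B < b) ∧ pt a t b ∈ V := by
    choose Np hNopen hN0 hNavoid using collapse_avoid
    set Q : Set (ℕ × ℕ) := Set.Iic B ×ˢ Set.Iic B with hQ
    have hQfin : Q.Finite := (Set.finite_Iic B).prod (Set.finite_Iic B)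
    set N := V ∩ ⋂ p ∈ Q, Np p with hN
    have hNopen' : IsOpen N := hVopen.inter (hQfin.isOpen_biInter (fun p _ => hNopen p))
    have h0N : (0 : BruckZero (Bicyclic α)) ∈ N := ⟨h0V, Set.mem_biInter (fun p _ => hN0 p)⟩
    have hne : ¬ N ⊆ {0} := by
      intro hsub
      apply h0
      have heq : N = {0} := Set.Subset.antisymm hsub (Set.singleton_subset_iff.mpr h0N)
      rw [← heq]
      exact hNopen'
    obtain ⟨z, hzN, hz0⟩ := Set.not_subset.mp hne
    have hz0' : z ≠ 0 := by simpa using hz0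
    obtain ⟨b', hb'⟩ := WithZero.ne_zero_iff_exists.mp hz0'
    obtain ⟨a, t, b⟩ := b'
    have hzpt : z = pt a t b := hb'.symm
    have hmem : z ∈ box (Bicyclic α) a b := ⟨t, hzpt⟩
    have hQ' : (a, b) ∉ Q := by
      intro hab
      exact hNavoid (a, b) z (Set.mem_iInter₂.mp hzN.2 (a, b) hab) hmem
    refine ⟨a, b, t, ?_, hzpt ▸ hzN.1⟩
    simp only [hQ, Set.mem_prod, Set.mem_Iic] at hQ'
    omega
  -- main fact: every middle appears in K at all far boxes
  have main_fact : ∀ (s : Bicyclic α) (x y : ℕ), B < x → B < y → pt x s y ∈ K := by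
    obtain ⟨a0, b0, t0, hab0, ht0V⟩ := seed
    have far0 : ∀ x y, B < x → B < y → pt x t0 y ∈ K := RL t0 a0 b0 (hVK ht0V) hab0
    intro s
    set α₁ : Bicyclic α := Bicyclic.mk s.val.1 t0.val.1 s.property.1 t0.property.1 with hα₁
    set t1 : Bicyclic α := Bicyclic.mk s.val.1 t0.val.2 s.property.1 t0.property.2 with ht1
    have hmul1 : α₁ * t0 = t1 := absorbL s t0
    obtain ⟨Sr, hSrf, hSr⟩ := shield hτ K V hKc hVopen h0V (Bruck.mk (B+1) α₁ (B+1)) εB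
    obtain ⟨Br, hBr⟩ := bnd Sr hSrf
    set q0 := max (B+1) (Br+1) with hq0def
    have hq0S : (B+1, q0) ∉ Sr := fun hin => by have := (hBr _ hin).2; omega
    have hy0 : pt (B+1) t0 q0 ∈ K := far0 _ _ (by omega) (by omega)
    have hstep1 : pt (B+1) t1 q0 ∈ V := by
      have h := hSr (B+1, q0) hq0S _ hy0 (pt_mem_box _ _ _)
      rwa [pt_def, shiftL_coe, eqmidL, hmul1] at h
    have far1 : ∀ x y, B < x → B < y → pt x t1 y ∈ K :=
      RL t1 (B+1) q0 (hVK hstep1) (Or.inl (by omega))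
    set β₁ : Bicyclic α := Bicyclic.mk t0.val.2 s.val.2 t0.property.2 s.property.2 with hβ₁
    have hmul2 : t1 * β₁ = s := absorbR s t0
    obtain ⟨Sc, hScf, hSc⟩ := shield hτ K V hKc hVopen h0V εB (Bruck.mk (B+1) β₁ (B+1))
    obtain ⟨Bc, hBc⟩ := bnd Sc hScf
    set p0 := max (B+1) (Bc+1) with hp0def
    have hp0S : (p0, B+1) ∉ Sc := fun hin => by have := (hBc _ hin).1; omega
    have hy1 : pt p0 t1 (B+1) ∈ K := far1 _ _ (by omega) (by omega)
    have hstep2 : pt p0 s (B+1) ∈ V := by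
      have h := hSc (p0, B+1) hp0S _ hy1 (pt_mem_box _ _ _)
      rwa [pt_def, shiftR_coe, eqmidL, hmul2] at h
    exact RL s p0 (B+1) (hVK hstep2) (Or.inl (by omega))
  -- strip extension
  have main_strip : ∀ (s : Bicyclic α) (p q : ℕ), B < p ∨ B < q → pt p s q ∈ K := by
    intro s p q hpq
    rcases hpq with hp | hq
    · exact adjust2 s p (max q (B+1)) hp (main_fact s p _ hp (by omega)) q
    · exact adjust1 s (max p (B+1)) q hq (main_fact s _ q (by omega) hq) p
  -- conclusion
  apply Set.Finite.subset ((Set.finite_Iic B).prod (Set.finite_Iic B))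
  rintro ⟨p, q⟩ hbad
  simp only [Set.mem_setOf_eq] at hbad
  simp only [Set.mem_prod, Set.mem_Iic]
  by_contra hpq
  apply hbad
  rintro y ⟨s, rfl⟩
  exact hKU (main_strip s p q (by omega))

end Top
end BP3

/-- For a locally compact Hausdorff shift-continuous topology on
`B⁰(B_k)` with non-isolated zero, each open neighborhood `U` of `0*` contains all but
finitely many of the boxes `[n,m]`. -/
theorem neighborhood_contains_cofinitely_many_boxes (k : ℕ)
    [TopologicalSpace (BruckZero (Bicyclic k))] [T2Space (BruckZero (Bicyclic k))]
    [LocallyCompactSpace (BruckZero (Bicyclic k))]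
    (hτ : ShiftContinuous (BruckZero (Bicyclic k)))
    (h0 : ¬ IsOpen ({0} : Set (BruckZero (Bicyclic k))))
    (U : Set (BruckZero (Bicyclic k)))
    (hU : IsOpen U) (h0U : (0 : BruckZero (Bicyclic k)) ∈ U) :
    {p : ℕ × ℕ | ¬ box (Bicyclic k) p.1 p.2 ⊆ U}.Finite :=
  BP3.aux_main hτ h0 U hU h0U
end
end
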